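/- The function ω on SL₂(ℝ) × SL₂(ℝ) defined via the principal logarithm of automorphy factors satisfies the 2-cocycle identity: ω(g₁, g₂) + ω(g₁g₂, g₃) = ω(g₁, g₂g₃) + ω(g₂, g₃) for all g₁, g₂, g₃ ∈ SL₂(ℝ). -/

import Mathlib

open Matrix UpperHalfPlane Complex

abbrev SL2R := Matrix.SpecialLinearGroup (Fin 2) ℝ

/-- The automorphy factor `j(g,z) = cz + d`. -/
noncomputable def jFac (g : SL2R) (z : ℂ) : ℂ :=
  (g.1 1 0 : ℝ) * z + (g.1 1 1 : ℝ)

/-- Petersson's 2-cocycle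
`ω(g,h) = (1/(2πi))(Log j(g, h·z) + Log j(h,z) − Log j(gh,z))`. -/
noncomputable def omegaC (g h : SL2R) (z : ℍ) : ℂ :=
  (1 / (2 * Real.pi * Complex.I)) *
    (Complex.log (jFac g ((h • z : ℍ) : ℂ)) + Complex.log (jFac h (z : ℂ))
      - Complex.log (jFac (g * h) (z : ℂ)))

lemma jFac_ne_zero (g : SL2R) (z : ℍ) : jFac g (z : ℂ) ≠ 0 := by
  have := UpperHalfPlane.linear_ne_zero (cd := fun i => g.1 1 i) z ?_
  · exact this
  · intro h
    have h0 : g.1 1 0 = 0 := congrFun h 0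
    have h1 : g.1 1 1 = 0 := congrFun h 1
    have hd := g.2
    rw [Matrix.det_fin_two, h0, h1] at hd
    simp at hd

lemma coe_smul' (h : SL2R) (z : ℍ) :
    ((h • z : ℍ) : ℂ) = (((h.1 0 0 : ℝ) : ℂ) * z + ((h.1 0 1 : ℝ) : ℂ)) / jFac h z := by
  rw [UpperHalfPlane.specialLinearGroup_apply]
  simp [jFac]

lemma jFac_cocycle (g h : SL2R) (z : ℍ) :
    jFac (g * h) (z : ℂ) = jFac g ((h • z : ℍ) : ℂ) * jFac h (z : ℂ) := by
  have hne := jFac_ne_zero h z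
  rw [coe_smul']
  simp only [jFac] at *
  field_simp
  simp only [Matrix.SpecialLinearGroup.coe_mul, Matrix.mul_apply, Fin.sum_univ_two]
  push_cast
  field_simp
  ring

lemma continuous_log_jFac (g : SL2R) {α : Type*} [TopologicalSpace α] {f : α → ℍ}
    (hf : Continuous fun u => ((f u : ℍ) : ℂ)) :
    Continuous fun u => Complex.log (jFac g ((f u : ℍ) : ℂ)) := by
  by_cases hc : g.1 1 0 = 0
  · have he : ∀ u, jFac g ((f u : ℍ) : ℂ) = ((g.1 1 1 : ℝ) : ℂ) := by
      intro u; simp [jFac, hc]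
    simp only [he]
    exact continuous_const
  · have hj : Continuous fun u => jFac g ((f u : ℍ) : ℂ) := by
      simp only [jFac]
      exact (continuous_const.mul hf).add continuous_const
    rw [continuous_iff_continuousAt]
    intro u
    refine (continuousAt_clog ?_).comp hj.continuousAt
    rw [Complex.mem_slitPlane_iff]
    right
    have him : (jFac g ((f u : ℍ) : ℂ)).im = g.1 1 0 * (f u).im := by
      simp [jFac, UpperHalfPlane.coe_im]
    rw [him]
    exact mul_ne_zero hc (ne_of_gt (f u).im_pos)

lemma continuous_coe_smul (h : SL2R) : Continuous fun u : ℍ => ((h • u : ℍ) : ℂ) := by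
  have he : ∀ u : ℍ, ((h • u : ℍ) : ℂ)
      = (((h.1 0 0 : ℝ) : ℂ) * u + ((h.1 0 1 : ℝ) : ℂ)) / jFac h u := fun u => coe_smul' h u
  simp only [he, jFac]
  exact ((continuous_const.mul continuous_coe).add continuous_const).div
    ((continuous_const.mul continuous_coe).add continuous_const)
    (fun u => jFac_ne_zero h u)

lemma lattice_sep (a b : ℂ) (ha : ∃ k : ℤ, a = k * (2 * Real.pi * Complex.I))
    (hb : ∃ k : ℤ, b = k * (2 * Real.pi * Complex.I)) (hab : ‖a - b‖ < 1) : a = b := by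
  obtain ⟨k, rfl⟩ := ha
  obtain ⟨l, rfl⟩ := hb
  by_contra hne
  have hk : k ≠ l := by rintro rfl; exact hne rfl
  have h1 : (1 : ℝ) ≤ |(k : ℝ) - l| := by
    have : (1 : ℤ) ≤ |k - l| := Int.one_le_abs (sub_ne_zero.2 hk)
    calc (1 : ℝ) ≤ |((k - l : ℤ) : ℝ)| := by exact_mod_cast this
      _ = |(k : ℝ) - l| := by push_cast; ring_nf
  have hnorm : ‖(k : ℂ) * (2 * Real.pi * Complex.I) - l * (2 * Real.pi * Complex.I)‖
      = |(k : ℝ) - l| * (2 * Real.pi) := by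
    rw [← sub_mul, norm_mul]
    have h2 : ((k : ℂ) - l) = (((k : ℝ) - l : ℝ) : ℂ) := by push_cast; ring
    have h3 : (2 * (Real.pi : ℂ) * Complex.I) = (((2 * Real.pi : ℝ)) : ℂ) * Complex.I := by
      push_cast; ring
    rw [h2, h3, norm_mul, Complex.norm_I, Complex.norm_real, Complex.norm_real]
    rw [Real.norm_eq_abs, Real.norm_eq_abs, abs_of_pos Real.two_pi_pos]
    ring
  rw [hnorm] at hab
  nlinarith [Real.pi_gt_three]

/-- The log-defect is independent of the base point. -/
lemma log_indep (g h : SL2R) (z w : ℍ) :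
    Complex.log (jFac g ((h • z : ℍ) : ℂ)) + Complex.log (jFac h (z : ℂ))
      - Complex.log (jFac (g * h) (z : ℂ))
    = Complex.log (jFac g ((h • w : ℍ) : ℂ)) + Complex.log (jFac h (w : ℂ))
      - Complex.log (jFac (g * h) (w : ℂ)) := by
  set F : ℍ → ℂ := fun u =>
    Complex.log (jFac g ((h • u : ℍ) : ℂ)) + Complex.log (jFac h (u : ℂ))
      - Complex.log (jFac (g * h) (u : ℂ)) with hF
  show F z = F w
  have hmem : ∀ u : ℍ, ∃ k : ℤ, F u = k * (2 * Real.pi * Complex.I) := by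
    intro u
    rw [← Complex.exp_eq_one_iff]
    rw [hF]
    rw [Complex.exp_sub, Complex.exp_add, Complex.exp_log (jFac_ne_zero g (h • u)),
      Complex.exp_log (jFac_ne_zero h u), Complex.exp_log (jFac_ne_zero (g * h) u),
      jFac_cocycle g h u, div_self]
    exact mul_ne_zero (jFac_ne_zero g (h • u)) (jFac_ne_zero h u)
  have hcont : Continuous F := by
    refine ((continuous_log_jFac g (continuous_coe_smul h)).add
      (continuous_log_jFac h continuous_coe)).sub
      (continuous_log_jFac (g * h) continuous_coe)
  have key : ∀ v u : ℍ, ‖F u - F v‖ < 1 → F u = F v := fun v u hd =>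
    lattice_sep _ _ (hmem u) (hmem v) hd
  set S : Set ℍ := {u | F u = F z} with hS
  have hopen : IsOpen S := by
    rw [isOpen_iff_mem_nhds]
    intro v hv
    have hb : F ⁻¹' Metric.ball (F v) 1 ∈ nhds v :=
      hcont.continuousAt.preimage_mem_nhds (Metric.ball_mem_nhds _ one_pos)
    filter_upwards [hb] with u hu
    have : F u = F v := key v u (by simpa [Complex.dist_eq] using hu)
    show F u = F z
    rw [this]; exact hv
  have hclosed : IsClosed S := by
    rw [← isOpen_compl_iff, isOpen_iff_mem_nhds]
    intro v hv
    have hb : F ⁻¹' Metric.ball (F v) 1 ∈ nhds v :=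
      hcont.continuousAt.preimage_mem_nhds (Metric.ball_mem_nhds _ one_pos)
    filter_upwards [hb] with u hu
    intro huS
    apply hv
    have : F u = F v := key v u (by simpa [Complex.dist_eq] using hu)
    show F v = F z
    rw [← this]; exact huS
  have huniv : S = Set.univ := IsClopen.eq_univ ⟨hclosed, hopen⟩ ⟨z, rfl⟩
  have : w ∈ S := huniv ▸ Set.mem_univ w
  exact this.symm

/-- The 2-cocycle identity for `ω`. -/
theorem omegaC_cocycle (g₁ g₂ g₃ : SL2R) (z : ℍ) :
    omegaC g₁ g₂ z + omegaC (g₁ * g₂) g₃ z = omegaC g₁ (g₂ * g₃) z + omegaC g₂ g₃ z := by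
  simp only [omegaC, mul_smul, ← mul_assoc]
  linear_combination (1 / (2 * (Real.pi : ℂ) * Complex.I)) * log_indep g₁ g₂ z (g₃ • z)
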